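/- For every k ∈ ℕ, the one-dimensional Lebesgue measure of Y_k equals 2^{−k}·2^{m_k}, i.e. μ₁(Y_k) = 2^{m_k − k}. -/

import Mathlib

open MeasureTheory Set ENNReal

/-- The 1-periodic Rademacher function: `1` on `[0, 1/2)`, `-1` on `[1/2, 1)`,
extended 1-periodically to `ℝ`. -/
noncomputable def rade (t : ℝ) : ℝ := if Int.fract t < 1 / 2 then 1 else -1

/-- `Yset m k = {t ∈ [0, 2^{m_k}] : ∑_{j=1}^{k} r₀(t / 2^{m_j}) = k}`. -/
def Yset (m : ℕ → ℕ) (k : ℕ) : Set ℝ :=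
  {t | t ∈ Icc (0 : ℝ) (2 ^ m k) ∧ ∑ j ∈ Finset.Icc 1 k, rade (t / 2 ^ m j) = (k : ℝ)}

def Cn (n : ℕ) : Set ℝ := {t | Int.fract (t / 2 ^ n) < 1 / 2}

def Dset (m : ℕ → ℕ) (k : ℕ) : Set ℝ := ⋂ j ∈ Finset.Icc 1 k, Cn (m j)

lemma rade_le_one (t : ℝ) : rade t ≤ 1 := by
  unfold rade; split <;> norm_num

lemma rade_eq_one_iff (t : ℝ) : rade t = 1 ↔ Int.fract t < 1 / 2 := by
  constructor
  · intro h1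
    by_contra hc
    simp only [rade, if_neg hc] at h1
    norm_num at h1
  · intro h; simp only [rade, if_pos h]

lemma Yset_eq (m : ℕ → ℕ) (k : ℕ) :
    Yset m k = Dset m k ∩ Icc (0 : ℝ) (2 ^ m k) := by
  ext t
  have h1 : (∑ j ∈ Finset.Icc 1 k, rade (t / 2 ^ m j) = (k : ℝ)) ↔
      ∀ j ∈ Finset.Icc 1 k, rade (t / 2 ^ m j) = 1 := by
    have : (k : ℝ) = ∑ j ∈ Finset.Icc 1 k, (1 : ℝ) := by
      simp [Nat.card_Icc]
    rw [this]
    exact Finset.sum_eq_sum_iff_of_le fun i _ => rade_le_one _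
  simp only [Yset, Dset, Cn, mem_setOf_eq, mem_inter_iff, mem_iInter, h1, rade_eq_one_iff]
  tauto

lemma Cn_measurable (n : ℕ) : MeasurableSet (Cn n) := by
  have : Cn n = (fun t : ℝ => Int.fract (t / 2 ^ n)) ⁻¹' Iio (1 / 2) := rfl
  rw [this]
  exact (measurable_fract.comp (measurable_id.div_const _)) measurableSet_Iio

lemma Dset_measurable (m : ℕ → ℕ) (k : ℕ) : MeasurableSet (Dset m k) :=
  MeasurableSet.biInter (Finset.Icc 1 k).countable_toSet fun j _ => Cn_measurable (m j)

lemma Cn_add {n N : ℕ} (h : n ≤ N) (z : ℤ) (t : ℝ) :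
    t + z * 2 ^ N ∈ Cn n ↔ t ∈ Cn n := by
  have key : ((t + z * 2 ^ N) / 2 ^ n) = t / 2 ^ n + ((z * 2 ^ (N - n) : ℤ) : ℝ) := by
    have h2 : (2 : ℝ) ^ N = 2 ^ (N - n) * 2 ^ n := by
      rw [← pow_add]; congr 1; omega
    push_cast
    rw [h2]
    field_simp
  simp only [Cn, mem_setOf_eq, key, Int.fract_add_intCast]

lemma Dset_add (m : ℕ → ℕ) (hmono : ∀ j, 1 ≤ j → m j < m (j + 1)) (k : ℕ) (z : ℤ) (t : ℝ) :
    t + z * 2 ^ m k ∈ Dset m k ↔ t ∈ Dset m k := by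
  have hle : ∀ j, 1 ≤ j → j ≤ k → m j ≤ m k := by
    intro j hj hjk
    have : ∀ d, m j ≤ m (j + d) := by
      intro d
      induction d with
      | zero => rfl
      | succ d ih => exact ih.trans (le_of_lt (hmono _ (by omega)))
    have := this (k - j)
    rwa [Nat.add_sub_cancel' hjk] at this
  simp only [Dset, mem_iInter]
  constructor <;> intro H j hj <;> have hj' := Finset.mem_Icc.mp hj
  · have := (Cn_add (hle j hj'.1 hj'.2) z t).mp (H j hj)
    exact this
  · exact (Cn_add (hle j hj'.1 hj'.2) z t).mpr (H j hj)

/-- Periodic set summation: measure over `[0, N·P)` is `N` times measure over `[0, P)`. -/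
lemma per_sum (S : Set ℝ) (hS : MeasurableSet S) (P : ℝ) (hP : 0 < P)
    (hper : ∀ (z : ℤ) (t : ℝ), t + z * P ∈ S ↔ t ∈ S) (N : ℕ) :
    volume (S ∩ Ico 0 (N * P)) = N * volume (S ∩ Ico 0 P) := by
  induction N with
  | zero => simp
  | succ N ih =>
    have hsplit : Ico (0 : ℝ) ((N + 1) * P) = Ico 0 (N * P) ∪ Ico (N * P) ((N + 1) * P) := by
      rw [Ico_union_Ico_eq_Ico]
      · positivity
      · nlinarith
    have hdisj : Disjoint (S ∩ Ico (0 : ℝ) (N * P)) (S ∩ Ico (N * P) ((N + 1) * P)) := by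
      apply Disjoint.mono inter_subset_right inter_subset_right
      exact Set.Ico_disjoint_Ico_same
    have hmeas : MeasurableSet (S ∩ Ico ((N : ℝ) * P) ((N + 1) * P)) :=
      hS.inter measurableSet_Ico
    push_cast
    rw [hsplit, inter_union_distrib_left, measure_union hdisj hmeas]
    have htrans : volume (S ∩ Ico ((N : ℝ) * P) ((N + 1) * P)) = volume (S ∩ Ico 0 P) := by
      have : (fun t : ℝ => t + N * P) ⁻¹' (S ∩ Ico ((N : ℝ) * P) ((N + 1) * P))
          = S ∩ Ico 0 P := by
        ext t
        simp only [mem_preimage, mem_inter_iff, mem_Ico]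
        constructor
        · rintro ⟨hS', h1, h2⟩
          refine ⟨?_, by linarith, by nlinarith⟩
          have := (hper N t).mp (by push_cast; exact hS')
          exact this
        · rintro ⟨hS', h1, h2⟩
          refine ⟨?_, by linarith, by nlinarith⟩
          have := (hper N t).mpr hS'
          push_cast at this
          exact this
      rw [← this, measure_preimage_add_right]
    rw [htrans]
    push_cast [ih]
    ring

lemma Cn_inter (n : ℕ) : Cn n ∩ Ico 0 ((2 : ℝ) ^ n) = Ico 0 ((2 : ℝ) ^ n / 2) := by
  have hpos : (0 : ℝ) < 2 ^ n := by positivity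
  ext t
  simp only [Cn, mem_inter_iff, mem_setOf_eq, mem_Ico]
  constructor
  · rintro ⟨hfr, h0, hB⟩
    have : Int.fract (t / 2 ^ n) = t / 2 ^ n := by
      rw [Int.fract_eq_self]
      constructor
      · positivity
      · rw [div_lt_one hpos]; exact hB
    rw [this] at hfr
    constructor
    · exact h0
    · rw [div_lt_iff₀ hpos] at hfr; linarith
  · rintro ⟨h0, hB⟩
    have hB2 : t < 2 ^ n := by nlinarith
    have : Int.fract (t / 2 ^ n) = t / 2 ^ n := by
      rw [Int.fract_eq_self]
      constructor
      · positivity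
      · rw [div_lt_one hpos]; exact hB2
    refine ⟨?_, h0, hB2⟩
    rw [this, div_lt_iff₀ hpos]
    nlinarith

lemma Dset_succ (m : ℕ → ℕ) (k : ℕ) :
    Dset m (k + 1) = Dset m k ∩ Cn (m (k + 1)) := by
  unfold Dset
  rw [show Finset.Icc 1 (k + 1) = insert (k + 1) (Finset.Icc 1 k) from
    (Finset.insert_Icc_right_eq_Icc_add_one (by omega)).symm]
  rw [Finset.set_biInter_insert]
  exact Set.inter_comm _ _

lemma main_ind (m : ℕ → ℕ) (hmono : ∀ j, 1 ≤ j → m j < m (j + 1)) (k : ℕ) :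
    volume (Dset m k ∩ Ico 0 ((2 : ℝ) ^ m k)) = 2 ^ m k / 2 ^ k := by
  induction k with
  | zero =>
    have hD : Dset m 0 = univ := by
      simp [Dset, Finset.Icc_eq_empty_of_lt (by omega : (0:ℕ) < 1)]
    rw [hD, univ_inter, Real.volume_Ico, sub_zero,
      ENNReal.ofReal_pow (by norm_num : (0:ℝ) ≤ 2)]
    norm_num
  | succ k ih =>
    have hsplit : Dset m (k + 1) ∩ Ico 0 ((2:ℝ) ^ m (k+1))
        = Dset m k ∩ Ico 0 ((2:ℝ) ^ m (k+1) / 2) := by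
      rw [Dset_succ, inter_assoc, Cn_inter]
    rw [hsplit]
    rcases Nat.eq_zero_or_pos k with rfl | hk
    · -- base case k = 0 : Dset m 0 = univ
      have hD : Dset m 0 = univ := by
        simp [Dset, Finset.Icc_eq_empty_of_lt (by omega : (0:ℕ) < 1)]
      rw [hD, univ_inter, Real.volume_Ico, sub_zero,
        ENNReal.ofReal_div_of_pos (by norm_num), ENNReal.ofReal_pow (by norm_num : (0:ℝ) ≤ 2)]
      norm_num
    · -- inductive case, k ≥ 1
      have hmk : m k < m (k + 1) := hmono k hk
      have hm1 : 1 ≤ m (k + 1) := by omega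
      set a := m (k + 1) - 1 - m k with ha
      have hexp : m (k + 1) = a + m k + 1 := by omega
      have hNP : ((2 ^ a : ℕ) : ℝ) * 2 ^ m k = 2 ^ m (k + 1) / 2 := by
        rw [hexp]
        push_cast
        rw [pow_succ, pow_add]
        ring
      rw [← hNP]
      rw [per_sum (Dset m k) (Dset_measurable m k) ((2:ℝ) ^ m k) (by positivity)
        (fun z t => Dset_add m hmono k z t) (2 ^ a)]
      rw [ih]
      have h2 : ((2 ^ a : ℕ) : ℝ≥0∞) = 2 ^ a := by push_cast; rfl
      rw [h2, hexp, ← mul_div_assoc, ← pow_add, pow_succ _ (a + m k), pow_succ _ k,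
        ENNReal.mul_div_mul_right _ _ (by norm_num) (by norm_num)]

/-- For a strictly increasing sequence of naturals `m_1 < m_2 < ⋯`, the set `Y_k` has
one-dimensional Lebesgue measure `2^{m_k - k} = 2^{-k}·2^{m_k}`. -/
theorem statement5 (m : ℕ → ℕ) (hmono : ∀ j, 1 ≤ j → m j < m (j + 1)) (k : ℕ) :
    volume (Yset m k) = 2 ^ m k / 2 ^ k := by
  rw [Yset_eq]
  have hB : (0 : ℝ) ≤ 2 ^ m k := by positivity
  have key : volume (Dset m k ∩ Icc (0:ℝ) (2 ^ m k)) =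
      volume (Dset m k ∩ Ico (0:ℝ) (2 ^ m k)) := by
    apply le_antisymm
    · calc volume (Dset m k ∩ Icc (0:ℝ) (2 ^ m k))
          ≤ volume ((Dset m k ∩ Ico (0:ℝ) (2 ^ m k)) ∪ {(2:ℝ) ^ m k}) := by
            apply measure_mono
            rintro x ⟨hx, h0, hB'⟩
            rcases lt_or_eq_of_le hB' with h | h
            · exact Or.inl ⟨hx, h0, h⟩
            · exact Or.inr h
        _ ≤ volume (Dset m k ∩ Ico (0:ℝ) (2 ^ m k)) + volume ({(2:ℝ) ^ m k} : Set ℝ) :=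
            measure_union_le _ _
        _ = volume (Dset m k ∩ Ico (0:ℝ) (2 ^ m k)) := by
            rw [Real.volume_singleton, add_zero]
    · exact measure_mono (inter_subset_inter_right _ Ico_subset_Icc_self)
  rw [key]
  exact main_ind m hmono k
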